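/- For all real x ∈ [−1,1] and real z with |z| > 1, the series (1/√(z²−1)) + (2/√(z²−1))·Σ_{ℓ=1}^∞ (−1)^ℓ/(z+√(z²−1))^ℓ · T_ℓ(x) converges to 1/(x+z), where T_ℓ is the ℓ-th Chebyshev polynomial of the first kind (assume z > 1 for definiteness). -/

import Mathlib

/-- Chebyshev expansion of `1/(x+z)`: for `x ∈ [−1,1]` and `z > 1`,
`1/√(z²−1) + (2/√(z²−1))·Σ_{ℓ≥1} (−1)^ℓ (z+√(z²−1))^{−ℓ} T_ℓ(x) = 1/(x+z)`. -/
theorem stmt_13 (x z : ℝ) (hx : x ∈ Set.Icc (-1 : ℝ) 1) (hz : 1 < z) :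
    HasSum (fun ℓ : ℕ =>
      2 / Real.sqrt (z ^ 2 - 1) *
        ((-1 : ℝ) ^ (ℓ + 1) / (z + Real.sqrt (z ^ 2 - 1)) ^ (ℓ + 1)) *
        (Polynomial.Chebyshev.T ℝ ((ℓ : ℤ) + 1)).eval x)
      (1 / (x + z) - 1 / Real.sqrt (z ^ 2 - 1)) := by
  obtain ⟨hx1, hx2⟩ := hx
  set s : ℝ := Real.sqrt (z ^ 2 - 1) with hs_def
  have hz2 : (0:ℝ) ≤ z ^ 2 - 1 := by nlinarith
  have hs2 : s ^ 2 = z ^ 2 - 1 := Real.sq_sqrt hz2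
  have hs_nonneg : 0 ≤ s := Real.sqrt_nonneg _
  have hs_pos : 0 < s := by
    rcases hs_nonneg.lt_or_eq with h | h
    · exact h
    · exfalso; nlinarith [hs2]
  have hszlt : s < z := by nlinarith
  set t : ℝ := s - z with ht_def
  have ht_neg : t < 0 := by simp only [ht_def]; linarith
  have ht_gt : -1 < t := by nlinarith
  have ht_abs : |t| < 1 := abs_lt.mpr ⟨ht_gt, by linarith⟩
  set θ : ℝ := Real.arccos x with hθ_def
  have hcos : Real.cos θ = x := Real.cos_arccos hx1 hx2
  -- complex setup
  set c : ℂ := Complex.exp (θ * Complex.I) with hc_def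
  have hc_ne : c ≠ 0 := Complex.exp_ne_zero _
  have hnorm_c : ‖c‖ = 1 := Complex.norm_exp_ofReal_mul_I θ
  have h2cos : c + c⁻¹ = 2 * (x:ℂ) := by
    have hcx : Complex.cos (θ:ℂ) = (x:ℂ) := by
      rw [← Complex.ofReal_cos, hcos]
    rw [Complex.cos] at hcx
    have hinv : c⁻¹ = Complex.exp (-(θ:ℂ) * Complex.I) := by
      rw [hc_def, ← Complex.exp_neg]; ring_nf
    rw [hinv, hc_def]
    linear_combination 2 * hcx
  have hcinv : c⁻¹ = 2 * (x:ℂ) - c := by linear_combination h2cos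
  have hcc : c * c - 2 * (x:ℂ) * c + 1 = 0 := by
    have h := congrArg (· * c) h2cos
    field_simp at h
    linear_combination h
  have hw : ‖(t : ℂ) * c‖ < 1 := by
    rw [norm_mul, Complex.norm_real, hnorm_c, mul_one]
    simpa using ht_abs
  have hv : ‖(t : ℂ) * c⁻¹‖ < 1 := by
    rw [norm_mul, Complex.norm_real, norm_inv, hnorm_c]
    simpa using ht_abs
  have hw_ne : (1 : ℂ) - (t : ℂ) * c ≠ 0 := by
    intro h
    have h1 : (1:ℂ) = (t:ℂ) * c := by linear_combination h
    rw [← h1] at hw; simp at hw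
  have hv_ne : (1 : ℂ) - (t : ℂ) * c⁻¹ ≠ 0 := by
    intro h
    have h1 : (1:ℂ) = (t:ℂ) * c⁻¹ := by linear_combination h
    rw [← h1] at hv; simp at hv
  have h1 : HasSum (fun ℓ : ℕ => ((t:ℂ) * c) ^ (ℓ + 1))
      (((t:ℂ) * c) * (1 - (t:ℂ) * c)⁻¹) := by
    simpa [pow_succ, mul_comm] using (hasSum_geometric_of_norm_lt_one hw).mul_left ((t:ℂ) * c)
  have h2 : HasSum (fun ℓ : ℕ => ((t:ℂ) * c⁻¹) ^ (ℓ + 1))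
      (((t:ℂ) * c⁻¹) * (1 - (t:ℂ) * c⁻¹)⁻¹) := by
    simpa [pow_succ, mul_comm] using (hasSum_geometric_of_norm_lt_one hv).mul_left ((t:ℂ) * c⁻¹)
  have hsumC : HasSum (fun ℓ : ℕ =>
      ((1:ℂ)/s) * (((t:ℂ) * c) ^ (ℓ + 1) + ((t:ℂ) * c⁻¹) ^ (ℓ + 1)))
      (((1:ℂ)/s) * (((t:ℂ) * c) * (1 - (t:ℂ) * c)⁻¹ + ((t:ℂ) * c⁻¹) * (1 - (t:ℂ) * c⁻¹)⁻¹)) :=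
    (h1.add h2).mul_left _
  -- value identity
  have hxz_pos : (0:ℝ) < x + z := by linarith
  have hxz_ne : x + z ≠ 0 := ne_of_gt hxz_pos
  have hs_ne : s ≠ 0 := ne_of_gt hs_pos
  have hcc1 : c * c⁻¹ = 1 := mul_inv_cancel₀ hc_ne
  have hD_pos : (0:ℝ) < 1 - 2*t*x + t^2 := by
    nlinarith [mul_nonneg (le_of_lt (neg_pos.mpr ht_neg)) (by linarith : (0:ℝ) ≤ x + 1),
      mul_pos (by linarith : (0:ℝ) < 1 + t) (by linarith : (0:ℝ) < 1 + t)]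
  have hDfact : (((1 - 2*t*x + t^2 : ℝ)) : ℂ) = (1 - (t:ℂ)*c) * (1 - (t:ℂ)*c⁻¹) := by
    push_cast
    linear_combination -(t:ℂ)^2 * hcc1 + (t:ℂ) * h2cos
  have hnum : (t:ℂ)*c*(1-(t:ℂ)*c⁻¹) + (t:ℂ)*c⁻¹*(1-(t:ℂ)*c) = ((2*t*x - 2*t^2 : ℝ) : ℂ) := by
    push_cast
    linear_combination (t:ℂ) * h2cos - 2*(t:ℂ)^2 * hcc1
  have hA : (t:ℂ)*c*(1-(t:ℂ)*c)⁻¹ + (t:ℂ)*c⁻¹*(1-(t:ℂ)*c⁻¹)⁻¹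
      = (((2*t*x - 2*t^2)/(1 - 2*t*x + t^2) : ℝ) : ℂ) := by
    have hD_ne : (((1 - 2*t*x + t^2 : ℝ)) : ℂ) ≠ 0 := by
      exact_mod_cast ne_of_gt hD_pos
    rw [Complex.ofReal_div, eq_div_iff hD_ne, hDfact]
    calc ((t:ℂ)*c*(1-(t:ℂ)*c)⁻¹ + (t:ℂ)*c⁻¹*(1-(t:ℂ)*c⁻¹)⁻¹) * ((1 - (t:ℂ)*c) * (1 - (t:ℂ)*c⁻¹))
        = (t:ℂ)*c*(1-(t:ℂ)*c⁻¹)*((1-(t:ℂ)*c)⁻¹*(1-(t:ℂ)*c))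
          + (t:ℂ)*c⁻¹*(1-(t:ℂ)*c)*((1-(t:ℂ)*c⁻¹)⁻¹*(1-(t:ℂ)*c⁻¹)) := by ring
      _ = (t:ℂ)*c*(1-(t:ℂ)*c⁻¹) + (t:ℂ)*c⁻¹*(1-(t:ℂ)*c) := by
          rw [inv_mul_cancel₀ hw_ne, inv_mul_cancel₀ hv_ne]; ring
      _ = ((2*t*x - 2*t^2 : ℝ) : ℂ) := hnum
  have hreal : 1/s * ((2*t*x - 2*t^2)/(1 - 2*t*x + t^2)) = 1/(x+z) - 1/s := by
    have hD' : (1 - 2*(s-z)*x + (s-z)^2) ≠ 0 := by rw [← ht_def]; exact ne_of_gt hD_pos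
    rw [ht_def]
    field_simp
    linear_combination (x+z-s) * hs2
  have hval : ((1:ℂ)/s) * (((t:ℂ) * c) * (1 - (t:ℂ) * c)⁻¹ + ((t:ℂ) * c⁻¹) * (1 - (t:ℂ) * c⁻¹)⁻¹)
      = ((1 / (x + z) - 1 / s : ℝ) : ℂ) := by
    rw [hA, ← hreal]
    push_cast
    ring
  -- cosine power identity
  have key : ∀ m : ℕ, Complex.cos ((m:ℂ) * (θ:ℂ)) * 2 = c ^ m + (c⁻¹) ^ m := by
    intro m
    rw [hc_def, ← Complex.exp_neg, ← Complex.exp_nat_mul, ← Complex.exp_nat_mul, Complex.cos]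
    rw [show (m:ℂ) * (θ:ℂ) * Complex.I = (m:ℂ) * ((θ:ℂ)*Complex.I) by ring,
        show -((m:ℂ) * (θ:ℂ)) * Complex.I = (m:ℂ) * -((θ:ℂ)*Complex.I) by ring]
    ring
  -- term identity
  have hzs_pos : (0:ℝ) < z + s := by linarith
  have hF : (fun ℓ : ℕ => ((2 / s * ((-1:ℝ) ^ (ℓ + 1) / (z + s) ^ (ℓ + 1)) *
        (Polynomial.Chebyshev.T ℝ ((ℓ : ℤ) + 1)).eval x : ℝ) : ℂ))
      = fun ℓ : ℕ => ((1:ℂ)/s) * (((t:ℂ) * c) ^ (ℓ + 1) + ((t:ℂ) * c⁻¹) ^ (ℓ + 1)) := by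
    funext ℓ
    have hT : (Polynomial.Chebyshev.T ℝ ((ℓ:ℤ)+1)).eval x = Real.cos (((ℓ+1 : ℕ) : ℝ) * θ) := by
      rw [← hcos, Polynomial.Chebyshev.T_real_cos]
      push_cast
      ring_nf
    have hpow : (-1:ℝ)^(ℓ+1)/(z+s)^(ℓ+1) = t^(ℓ+1) := by
      rw [← div_pow]
      congr 1
      rw [div_eq_iff (ne_of_gt hzs_pos)]
      linear_combination -hs2 - (z+s)*ht_def
    rw [hT, hpow]
    have k := key (ℓ+1)
    push_cast at k ⊢
    linear_combination ((t:ℂ)^(ℓ+1)/(s:ℂ)) * k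
  rw [hval, ← hF] at hsumC
  exact Complex.hasSum_ofReal.mp hsumC
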